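/- Let X¹, X², L̄, Ū be as follows: X¹, X² : [0,T] → [0,b] continuous with associated Skorohod conditions ∫_0^T X^i dL^i = ∫_0^T (b − X^i) dU^i = 0 for nondecreasing L^i, U^i vanishing at 0 (i = 1,2). Define dL̄_s = 1_{X¹_s ≤ 0} dL²_s and dŪ_s = 1_{X²_s < b} dU¹_s + dU²_s. Then the pair (X¹ ∨ X², L̄, Ū) again satisfies the Skorohod conditions: ∫_0^T (X¹_t ∨ X²_t) dL̄_t = 0 and ∫_0^T (b − X¹_t ∨ X²_t) dŪ_t = 0. -/

import Mathlib

open Set MeasureTheory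

lemma ae_zero_of_skor (T : ℝ) (f : ℝ → ℝ) (hf : Continuous f) (hnn : ∀ s, 0 ≤ f s)
    (μ : StieltjesFunction ℝ)
    (h : (∫ s in Icc 0 T, f s ∂μ.measure) = 0) :
    ∀ᵐ s ∂(μ.measure.restrict (Icc 0 T)), f s = 0 := by
  have hint : IntegrableOn f (Icc 0 T) μ.measure := hf.integrableOn_Icc
  have := (integral_eq_zero_iff_of_nonneg hnn hint).mp h
  filter_upwards [this] with s hs using hs

set_option maxHeartbeats 1000000 in
/-- The pair `(X¹ ∨ X², L̄, Ū)` again satisfies the Skorohod conditions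
(pathwise uniqueness step of Example 2.1). -/
theorem stmt_8 (T b : ℝ) (hT : 0 < T) (hb : 0 < b)
    (X1 X2 : ℝ → ℝ) (hX1 : Continuous X1) (hX2 : Continuous X2)
    (hX1r : ∀ s, X1 s ∈ Icc 0 b) (hX2r : ∀ s, X2 s ∈ Icc 0 b)
    (L1 L2 U1 U2 : StieltjesFunction ℝ)
    (hSkorL1 : (∫ s in Icc 0 T, X1 s ∂L1.measure) = 0)
    (hSkorU1 : (∫ s in Icc 0 T, (b - X1 s) ∂U1.measure) = 0)
    (hSkorL2 : (∫ s in Icc 0 T, X2 s ∂L2.measure) = 0)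
    (hSkorU2 : (∫ s in Icc 0 T, (b - X2 s) ∂U2.measure) = 0) :
    (∫ s in Icc 0 T, max (X1 s) (X2 s)
        ∂(L2.measure.withDensity
            (Set.indicator {s | X1 s ≤ 0} (fun _ => (1 : ENNReal))))) = 0
    ∧ (∫ s in Icc 0 T, (b - max (X1 s) (X2 s))
        ∂(U1.measure.withDensity
            (Set.indicator {s | X2 s < b} (fun _ => (1 : ENNReal))) + U2.measure)) = 0 := by
  have hS1 : MeasurableSet {s | X1 s ≤ 0} :=
    measurableSet_le hX1.measurable measurable_const
  have hS2 : MeasurableSet {s | X2 s < b} :=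
    measurableSet_lt hX2.measurable measurable_const
  have hIcc : MeasurableSet (Icc (0:ℝ) T) := measurableSet_Icc
  -- a.e. statements from the Skorohod conditions
  have haeL2 : ∀ᵐ s ∂(L2.measure.restrict (Icc 0 T)), X2 s = 0 :=
    ae_zero_of_skor T X2 hX2 (fun s => (hX2r s).1) L2 hSkorL2
  have haeU1 : ∀ᵐ s ∂(U1.measure.restrict (Icc 0 T)), b - X1 s = 0 :=
    ae_zero_of_skor T (fun s => b - X1 s) (continuous_const.sub hX1)
      (fun s => sub_nonneg.mpr (hX1r s).2) U1 hSkorU1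
  have haeU2 : ∀ᵐ s ∂(U2.measure.restrict (Icc 0 T)), b - X2 s = 0 :=
    ae_zero_of_skor T (fun s => b - X2 s) (continuous_const.sub hX2)
      (fun s => sub_nonneg.mpr (hX2r s).2) U2 hSkorU2
  constructor
  · have hwd : L2.measure.withDensity
        (Set.indicator {s | X1 s ≤ 0} (fun _ => (1 : ENNReal)))
        = L2.measure.restrict {s | X1 s ≤ 0} := withDensity_indicator_one hS1
    rw [hwd]
    rw [Measure.restrict_restrict hIcc]
    apply integral_eq_zero_of_ae
    have hmem : ∀ᵐ s ∂(L2.measure.restrict (Icc 0 T ∩ {s | X1 s ≤ 0})),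
        s ∈ Icc 0 T ∩ {s | X1 s ≤ 0} := ae_restrict_mem (hIcc.inter hS1)
    have hX2z : ∀ᵐ s ∂(L2.measure.restrict (Icc 0 T ∩ {s | X1 s ≤ 0})), X2 s = 0 :=
      ae_mono (Measure.restrict_mono inter_subset_left le_rfl) haeL2
    filter_upwards [hmem, hX2z] with s hs h2
    have h1 : X1 s = 0 := le_antisymm hs.2 (hX1r s).1
    simp [h1, h2]
  · set f := fun s => b - max (X1 s) (X2 s) with hf
    have hfc : Continuous f := continuous_const.sub (hX1.max hX2)
    have hwd2 : U1.measure.withDensity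
        (Set.indicator {s | X2 s < b} (fun _ => (1 : ENNReal)))
        = U1.measure.restrict {s | X2 s < b} := withDensity_indicator_one hS2
    rw [hwd2]
    rw [Measure.restrict_add]
    rw [Measure.restrict_restrict hIcc]
    have hi0 : IntegrableOn f (Icc 0 T) U1.measure := hfc.integrableOn_Icc
    have hint1 : Integrable f (U1.measure.restrict (Icc 0 T ∩ {s | X2 s < b})) :=
      hi0.mono_set inter_subset_left
    have hint2 : Integrable f (U2.measure.restrict (Icc 0 T)) :=
      hfc.integrableOn_Icc
    rw [integral_add_measure hint1 hint2]
    have h1 : (∫ s, f s ∂(U1.measure.restrict (Icc 0 T ∩ {s | X2 s < b}))) = 0 := by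
      apply integral_eq_zero_of_ae
      have hmem : ∀ᵐ s ∂(U1.measure.restrict (Icc 0 T ∩ {s | X2 s < b})),
          s ∈ Icc 0 T ∩ {s | X2 s < b} := ae_restrict_mem (hIcc.inter hS2)
      have hX1b : ∀ᵐ s ∂(U1.measure.restrict (Icc 0 T ∩ {s | X2 s < b})), b - X1 s = 0 :=
        ae_mono (Measure.restrict_mono inter_subset_left le_rfl) haeU1
      filter_upwards [hmem, hX1b] with s hs h2
      have hx1 : X1 s = b := by linarith
      have : max (X1 s) (X2 s) = b := by
        rw [hx1]; exact max_eq_left (hX2r s).2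
      simp [f, this]
    have h2 : (∫ s, f s ∂(U2.measure.restrict (Icc 0 T))) = 0 := by
      apply integral_eq_zero_of_ae
      filter_upwards [haeU2] with s h2
      have hx2 : X2 s = b := by linarith
      have : max (X1 s) (X2 s) = b := by
        rw [hx2]; exact max_eq_right (hX1r s).2
      simp [f, this]
    rw [h1, h2, add_zero]
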